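/- For every q with 1 < q ≤ 2, the function t ↦ h_q(t)² is convex on [0,1], where h_q(t) = (1 - ((1+√(1-t))/2)^q - ((1-√(1-t))/2)^q)^{1/q}. -/

import Mathlib

noncomputable def h (q t : ℝ) : ℝ :=
  (1 - ((1 + Real.sqrt (1 - t)) / 2) ^ q - ((1 - Real.sqrt (1 - t)) / 2) ^ q) ^ (1 / q)

open Real Set

-- (1+u)^p ≤ 1+pu proxy: tangent line bound for concave rpow
lemma tangent_rpow {x y p : ℝ} (hx : 0 < x) (hy : 0 ≤ y) (hp0 : 0 ≤ p) (hp1 : p ≤ 1) :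
    (x + y) ^ p ≤ x ^ p + p * y * x ^ (p - 1) := by
  have hxp : (0:ℝ) < x ^ p := Real.rpow_pos_of_pos hx p
  have h1 : x + y = x * (1 + y / x) := by field_simp
  have h2 : (x * (1 + y/x)) ^ p = x ^ p * (1 + y/x) ^ p :=
    Real.mul_rpow hx.le (by positivity)
  have h3 : (1 + y/x) ^ p ≤ 1 + p * (y/x) :=
    rpow_one_add_le_one_add_mul_self
      (le_trans (by norm_num) (by positivity : (0:ℝ) ≤ y/x)) hp0 hp1
  have h4 : x ^ (p-1) = x ^ p / x := by
    rw [Real.rpow_sub hx, Real.rpow_one]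
  calc (x+y)^p = x^p * (1+y/x)^p := by rw [h1, h2]
    _ ≤ x^p * (1 + p*(y/x)) := by
        apply mul_le_mul_of_nonneg_left h3 hxp.le
    _ = x^p + p*y*x^(p-1) := by rw [h4]; field_simp

-- 2^p ≤ 1 + p on [0,1]
lemma two_rpow_le (p : ℝ) (hp0 : 0 ≤ p) (hp1 : p ≤ 1) : (2:ℝ) ^ p ≤ 1 + p := by
  have h := convexOn_exp.2 (mem_univ (0:ℝ)) (mem_univ (Real.log 2))
    (by linarith : (0:ℝ) ≤ 1 - p) hp0 (by ring)
  simp only [smul_eq_mul, mul_zero, zero_add, Real.exp_zero, Real.exp_log two_pos] at h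
  rw [Real.rpow_def_of_pos two_pos]
  calc Real.exp (Real.log 2 * p) = Real.exp (p * Real.log 2) := by ring_nf
    _ ≤ (1-p) * 1 + p * 2 := h
    _ = 1 + p := by ring

lemma lemS {p y x : ℝ} (hp0 : 0 < p) (hp1 : p ≤ 1) (hy : 0 < y) (hxy : y ≤ x) :
    (2-p) * (x-y) * ((x+y)^(p+1) - x^(p+1) - y^(p+1)) ≤ 4*x*y*(x^p - y^p) := by
  set Z : ℝ → ℝ := fun u => 4*y*u^(p+1) - 4*y^(p+1)*u - (2-p)*(u-y)*((u+y)^(p+1) - u^(p+1) - y^(p+1)) with hZ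
  set Z1 : ℝ → ℝ := fun u => 4*(p+1)*y*u^p - 4*y^(p+1)
      - (2-p)*(((u+y)^(p+1) - u^(p+1) - y^(p+1)) + (p+1)*(u-y)*((u+y)^p - u^p)) with hZ1
  set Z2 : ℝ → ℝ := fun u => 4*p*(p+1)*y*u^(p-1)
      - (2-p)*(p+1)*(2*((u+y)^p - u^p) + p*(u-y)*((u+y)^(p-1) - u^(p-1))) with hZ2
  -- derivative of Z is Z1
  have hdZ : ∀ u : ℝ, 0 < u → HasDerivAt Z (Z1 u) u := by
    intro u hu
    have huy : (0:ℝ) < u + y := by linarith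
    have h1 : HasDerivAt (fun v : ℝ => v ^ (p+1)) ((p+1) * u ^ p) u := by
      have := Real.hasDerivAt_rpow_const (x := u) (p := p+1) (Or.inl hu.ne')
      simpa using this
    have h2 : HasDerivAt (fun v : ℝ => (v + y) ^ (p+1)) ((p+1) * (u+y) ^ p) u := by
      have base : HasDerivAt (fun v : ℝ => v + y) 1 u := (hasDerivAt_id u).add_const y
      have := (Real.hasDerivAt_rpow_const (x := u + y) (p := p+1) (Or.inl huy.ne')).comp u base
      simpa [Function.comp_def] using this
    have h3 : HasDerivAt (fun v : ℝ => 4*y*v^(p+1) - 4*y^(p+1)*v)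
        (4*y*((p+1)*u^p) - 4*y^(p+1)) u := by
      have := ((h1.const_mul (4*y)).sub ((hasDerivAt_id u).const_mul (4*y^(p+1))))
      exact this.congr_deriv (by simp)
    have h4 : HasDerivAt (fun v : ℝ => (2-p)*(v-y)*((v+y)^(p+1) - v^(p+1) - y^(p+1)))
        ((2-p)*(((u+y)^(p+1) - u^(p+1) - y^(p+1)) + (u-y)*((p+1)*(u+y)^p - (p+1)*u^p))) u := by
      have hl : HasDerivAt (fun v : ℝ => (2-p)*(v-y)) (2-p) u := by
        simpa using ((hasDerivAt_id u).sub_const y).const_mul (2-p)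
      have hr : HasDerivAt (fun v : ℝ => (v+y)^(p+1) - v^(p+1) - y^(p+1))
          ((p+1)*(u+y)^p - (p+1)*u^p) u := by
        simpa using (h2.sub h1).sub_const (y^(p+1))
      have := hl.mul hr
      refine this.congr_deriv ?_
      ring
    have := h3.sub h4
    refine this.congr_deriv ?_
    simp only [hZ1]; ring
  -- derivative of Z1 is Z2
  have hdZ1 : ∀ u : ℝ, 0 < u → HasDerivAt Z1 (Z2 u) u := by
    intro u hu
    have huy : (0:ℝ) < u + y := by linarith
    have h1 : HasDerivAt (fun v : ℝ => v ^ p) (p * u ^ (p-1)) u := by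
      simpa using Real.hasDerivAt_rpow_const (x := u) (p := p) (Or.inl hu.ne')
    have h1y : HasDerivAt (fun v : ℝ => (v+y) ^ p) (p * (u+y) ^ (p-1)) u := by
      have base : HasDerivAt (fun v : ℝ => v + y) 1 u := (hasDerivAt_id u).add_const y
      simpa [Function.comp_def] using (Real.hasDerivAt_rpow_const (x := u + y) (p := p) (Or.inl huy.ne')).comp u base
    have h2 : HasDerivAt (fun v : ℝ => v ^ (p+1)) ((p+1) * u ^ p) u := by
      simpa using Real.hasDerivAt_rpow_const (x := u) (p := p+1) (Or.inl hu.ne')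
    have h2y : HasDerivAt (fun v : ℝ => (v + y) ^ (p+1)) ((p+1) * (u+y) ^ p) u := by
      have base : HasDerivAt (fun v : ℝ => v + y) 1 u := (hasDerivAt_id u).add_const y
      simpa [Function.comp_def] using (Real.hasDerivAt_rpow_const (x := u + y) (p := p+1) (Or.inl huy.ne')).comp u base
    have hA : HasDerivAt (fun v : ℝ => 4*(p+1)*y*v^p - 4*y^(p+1))
        (4*(p+1)*y*(p*u^(p-1))) u := by
      simpa using (h1.const_mul (4*(p+1)*y)).sub_const (4*y^(p+1))
    have hB : HasDerivAt (fun v : ℝ => (v+y)^(p+1) - v^(p+1) - y^(p+1))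
        ((p+1)*(u+y)^p - (p+1)*u^p) u := by
      simpa using (h2y.sub h2).sub_const (y^(p+1))
    have hC : HasDerivAt (fun v : ℝ => (p+1)*(v-y)*((v+y)^p - v^p))
        ((p+1)*((u+y)^p - u^p) + (p+1)*(u-y)*(p*(u+y)^(p-1) - p*u^(p-1))) u := by
      have hl : HasDerivAt (fun v : ℝ => (p+1)*(v-y)) (p+1) u := by
        simpa using ((hasDerivAt_id u).sub_const y).const_mul (p+1)
      have hr : HasDerivAt (fun v : ℝ => (v+y)^p - v^p) (p*(u+y)^(p-1) - p*u^(p-1)) u :=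
        h1y.sub h1
      have := hl.mul hr
      refine this.congr_deriv ?_
      try ring
    have := hA.sub ((hB.add hC).const_mul (2-p))
    refine this.congr_deriv ?_
    simp only [hZ2]; ring
  -- Z2 nonneg on [y, ∞)
  have hZ2nonneg : ∀ u : ℝ, y ≤ u → 0 ≤ Z2 u := by
    intro u hu
    have hu0 : 0 < u := lt_of_lt_of_le hy hu
    have t1 : (u+y)^p ≤ u^p + p*y*u^(p-1) := tangent_rpow hu0 hy.le hp0.le hp1
    have t2 : (u+y)^(p-1) ≤ u^(p-1) :=
      Real.rpow_le_rpow_of_nonpos hu0 (by linarith) (by linarith)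
    have hup : (0:ℝ) < u ^ (p-1) := Real.rpow_pos_of_pos hu0 _
    have h2p : (0:ℝ) ≤ 2 - p := by linarith
    have h1p : (0:ℝ) ≤ p + 1 := by linarith
    have key3 : 0 ≤ (2-p)*(p+1)*p*(u-y)*(u^(p-1)-(u+y)^(p-1)) :=
      mul_nonneg (mul_nonneg (mul_nonneg (mul_nonneg h2p h1p) hp0.le)
        (sub_nonneg.2 hu)) (sub_nonneg.2 t2)
    have key2 : (2-p)*(p+1)*2*((u+y)^p - u^p) ≤ (2-p)*(p+1)*2*(p*y*u^(p-1)) := by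
      apply mul_le_mul_of_nonneg_left (by linarith) 
      have : (0:ℝ) ≤ (2-p)*(p+1) := mul_nonneg h2p h1p
      linarith
    have key1 : (2-p)*(p+1)*2*(p*y*u^(p-1)) ≤ 4*p*(p+1)*y*u^(p-1) := by
      have hm : (0:ℝ) ≤ p*p*(p+1)*y*u^(p-1) := by positivity
      nlinarith [hm]
    simp only [hZ2]
    nlinarith [key1, key2, key3]
  -- Z1 y ≥ 0
  have hZ1y : 0 ≤ Z1 y := by
    have h2y : ((2:ℝ)*y)^(p+1) = 2^(p+1) * y^(p+1) := Real.mul_rpow (by norm_num) hy.le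
    have hyy : y * y^p = y^(p+1) := by
      rw [Real.rpow_add_one hy.ne' p]; ring
    have h2p : (2:ℝ)^(p+1) = 2 * 2^p := by
      rw [Real.rpow_add_one (by norm_num : (2:ℝ) ≠ 0) p]; ring
    have hb : (2:ℝ)^p ≤ 1 + p := two_rpow_le p hp0.le hp1
    have hyp1 : (0:ℝ) < y^(p+1) := Real.rpow_pos_of_pos hy _
    simp only [hZ1]
    have : y + y = 2*y := by ring
    rw [this, h2y, h2p]
    have hmul : (2*(2-p)*y^(p+1)) * (2^p) ≤ (2*(2-p)*y^(p+1)) * (1+p) :=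
      mul_le_mul_of_nonneg_left hb (by nlinarith [hyp1])
    nlinarith [hmul, hyy, mul_nonneg (mul_nonneg hp0.le hp0.le) hyp1.le]
  -- Z1 monotone on Ici y
  have hmono1 : MonotoneOn Z1 (Ici y) := by
    apply monotoneOn_of_deriv_nonneg (convex_Ici y)
    · intro u hu
      exact (hdZ1 u (lt_of_lt_of_le hy hu)).differentiableAt.continuousAt.continuousWithinAt
    · intro u hu
      rw [interior_Ici] at hu
      exact (hdZ1 u (hy.trans hu)).differentiableAt.differentiableWithinAt
    · intro u hu
      rw [interior_Ici] at hu
      rw [(hdZ1 u (hy.trans hu)).deriv]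
      exact hZ2nonneg u hu.le
  -- Z monotone on Ici y
  have hmono : MonotoneOn Z (Ici y) := by
    apply monotoneOn_of_deriv_nonneg (convex_Ici y)
    · intro u hu
      exact (hdZ u (lt_of_lt_of_le hy hu)).differentiableAt.continuousAt.continuousWithinAt
    · intro u hu
      rw [interior_Ici] at hu
      exact (hdZ u (hy.trans hu)).differentiableAt.differentiableWithinAt
    · intro u hu
      rw [interior_Ici] at hu
      rw [(hdZ u (hy.trans hu)).deriv]
      calc (0:ℝ) ≤ Z1 y := hZ1y
        _ ≤ Z1 u := hmono1 self_mem_Ici (mem_Ici.2 hu.le) hu.le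
  -- conclude
  have hx0 : 0 < x := lt_of_lt_of_le hy hxy
  have hZy : Z y = 0 := by simp only [hZ]; ring
  have hZx : 0 ≤ Z x := by
    have := hmono self_mem_Ici (mem_Ici.2 hxy) hxy
    rwa [hZy] at this
  have e1 : x^(p+1) = x^p * x := Real.rpow_add_one hx0.ne' p
  have e2 : y^(p+1) = y^p * y := Real.rpow_add_one hy.ne' p
  simp only [hZ] at hZx
  rw [e1, e2] at hZx ⊢
  nlinarith [hZx]

lemma lemT {p y x : ℝ} (hp0 : 0 < p) (hp1 : p < 1) (hy : 0 < y) (hxy : y ≤ x) :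
    p*(x-y)*(x^(p-1)+y^(p-1))/2 - (x^p - y^p)
      ≤ (1-p)*(2-p)*(x-y)^2*(x^p-y^p)/(8*x*y) := by
  rcases eq_or_lt_of_le hxy with rfl | hlt
  · simp
  have hx0 : 0 < x := hy.trans hlt
  have hp1' : p - 1 ≠ 0 := by linarith
  have hp2' : p - 2 ≠ 0 := by linarith
  set C0 : ℝ := (x-y)^2/(4*x*y) + 1 with hC0
  set u : ℝ → ℝ := fun t => C0/p * t^p - (x+y)/(p-1) * t^(p-1) + x*y/(p-2)*t^(p-2) with hu
  set U : ℝ → ℝ := fun t => C0 * t^(p-1) - (x+y) * t^(p-2) + x*y*t^(p-3) with hU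
  have hdu : ∀ t : ℝ, 0 < t → HasDerivAt u (U t) t := by
    intro t ht
    have h1 : HasDerivAt (fun v : ℝ => v ^ p) (p * t ^ (p-1)) t := by
      simpa using Real.hasDerivAt_rpow_const (x := t) (p := p) (Or.inl ht.ne')
    have h2 : HasDerivAt (fun v : ℝ => v ^ (p-1)) ((p-1) * t ^ (p-2)) t := by
      have := Real.hasDerivAt_rpow_const (x := t) (p := p-1) (Or.inl ht.ne')
      convert this using 2
      ring
    have h3 : HasDerivAt (fun v : ℝ => v ^ (p-2)) ((p-2) * t ^ (p-3)) t := by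
      have := Real.hasDerivAt_rpow_const (x := t) (p := p-2) (Or.inl ht.ne')
      convert this using 2
      ring
    have := ((h1.const_mul (C0/p)).sub (h2.const_mul ((x+y)/(p-1)))).add
      (h3.const_mul (x*y/(p-2)))
    refine this.congr_deriv ?_
    simp only [hU]
    field_simp
  have hUnonneg : ∀ t : ℝ, 0 < t → 0 ≤ U t := by
    intro t ht
    have e1 : t^(p-1) = t^(p-3)*t*t := by
      rw [show p-1 = p-3+1+1 by ring, Real.rpow_add_one ht.ne', Real.rpow_add_one ht.ne']
    have e2 : t^(p-2) = t^(p-3)*t := by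
      rw [show p-2 = p-3+1 by ring, Real.rpow_add_one ht.ne']
    have ht3 : (0:ℝ) ≤ t^(p-3) := Real.rpow_nonneg ht.le _
    have key : U t * (4*x*y) = t^(p-3) * ((x+y)*t - 2*x*y)^2 := by
      simp only [hU, hC0]
      rw [e1, e2]
      field_simp
      ring
    have h4xy : (0:ℝ) < 4*x*y := by positivity
    nlinarith [mul_nonneg ht3 (sq_nonneg ((x+y)*t - 2*x*y)), key, h4xy]
  have humono : u y ≤ u x := by
    have hmono : MonotoneOn u (Icc y x) := by
      apply monotoneOn_of_deriv_nonneg (convex_Icc y x)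
      · intro t htm
        exact (hdu t (lt_of_lt_of_le hy htm.1)).differentiableAt.continuousAt.continuousWithinAt
      · intro t htm
        rw [interior_Icc] at htm
        exact (hdu t (hy.trans htm.1)).differentiableAt.differentiableWithinAt
      · intro t htm
        rw [interior_Icc] at htm
        rw [(hdu t (hy.trans htm.1)).deriv]
        exact hUnonneg t (hy.trans htm.1)
    exact hmono (left_mem_Icc.2 hxy) (right_mem_Icc.2 hxy) hxy
  -- the algebraic identity
  have ex1 : x^(p-1) = x^p/x := by rw [Real.rpow_sub hx0, Real.rpow_one]
  have ey1 : y^(p-1) = y^p/y := by rw [Real.rpow_sub hy, Real.rpow_one]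
  have ex2 : x^(p-2) = x^p/(x*x) := by
    rw [show p-2 = p-1-1 by ring, Real.rpow_sub hx0, Real.rpow_sub hx0, Real.rpow_one, div_div]
  have ey2 : y^(p-2) = y^p/(y*y) := by
    rw [show p-2 = p-1-1 by ring, Real.rpow_sub hy, Real.rpow_sub hy, Real.rpow_one, div_div]
  have hid : (1-p)*(2-p)*(x-y)^2*(x^p-y^p)/(8*x*y)
      - (p*(x-y)*(x^(p-1)+y^(p-1))/2 - (x^p - y^p))
      = p*(1-p)*(2-p)/2 * (u x - u y) := by
    simp only [hu, hC0]
    rw [ex1, ey1, ex2, ey2]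
    field_simp
    ring
  have hcoef : (0:ℝ) ≤ p*(1-p)*(2-p)/2 := by
    have := mul_nonneg (mul_nonneg hp0.le (by linarith : (0:ℝ) ≤ 1-p))
      (by linarith : (0:ℝ) ≤ 2-p)
    linarith
  have hfin : 0 ≤ p*(1-p)*(2-p)/2 * (u x - u y) :=
    mul_nonneg hcoef (sub_nonneg.2 humono)
  linarith [hid, hfin]

lemma cruxG {p y x : ℝ} (hp0 : 0 < p) (hp1 : p ≤ 1) (hy : 0 < y) (hxy : y < x)
    (hG : 0 ≤ (x+y)^(p+1) - x^(p+1) - y^(p+1)) :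
    ((x+y)^(p+1) - x^(p+1) - y^(p+1)) * (p*(x-y)*(x^(p-1)+y^(p-1))/2 - (x^p-y^p))
      ≤ (1-p)*(x-y)*(x^p-y^p)^2/2 := by
  rcases eq_or_lt_of_le hp1 with rfl | hp1'
  · have e1 : x^((1:ℝ)-1) = 1 := by norm_num
    have e2 : y^((1:ℝ)-1) = 1 := by norm_num
    have e3 : x^(1:ℝ) = x := Real.rpow_one x
    have e4 : y^(1:ℝ) = y := Real.rpow_one y
    rw [e1, e2, e3, e4]
    ring_nf
    nlinarith [hG]
  · have hW : 0 < x^p - y^p := sub_pos.2 (Real.rpow_lt_rpow hy.le hxy hp0)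
    have h1p : (0:ℝ) ≤ 1 - p := by linarith
    have hxy' : (0:ℝ) ≤ x - y := by linarith
    have hx0 : 0 < x := hy.trans hxy
    by_cases hL : p*(x-y)*(x^(p-1)+y^(p-1))/2 - (x^p-y^p) ≤ 0
    · have h1 : ((x+y)^(p+1) - x^(p+1) - y^(p+1)) * (p*(x-y)*(x^(p-1)+y^(p-1))/2 - (x^p-y^p)) ≤ 0 :=
        mul_nonpos_of_nonneg_of_nonpos hG hL
      have h2 : 0 ≤ (1-p)*(x-y)*(x^p-y^p)^2/2 :=
        div_nonneg (mul_nonneg (mul_nonneg h1p hxy') (sq_nonneg _)) (by norm_num)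
      linarith
    · push_neg at hL
      have hT := lemT hp0 hp1' hy hxy.le
      have hS := lemS hp0 hp1 hy hxy.le
      have hm : (0:ℝ) ≤ (1-p)*(x-y)*(x^p-y^p)/(8*x*y) :=
        div_nonneg (mul_nonneg (mul_nonneg h1p hxy') hW.le) (by positivity)
      calc ((x+y)^(p+1) - x^(p+1) - y^(p+1)) * (p*(x-y)*(x^(p-1)+y^(p-1))/2 - (x^p-y^p))
          ≤ ((x+y)^(p+1) - x^(p+1) - y^(p+1)) * ((1-p)*(2-p)*(x-y)^2*(x^p-y^p)/(8*x*y)) :=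
            mul_le_mul_of_nonneg_left hT hG
        _ = ((2-p)*(x-y)*((x+y)^(p+1) - x^(p+1) - y^(p+1))) * ((1-p)*(x-y)*(x^p-y^p)/(8*x*y)) := by
            ring
        _ ≤ (4*x*y*(x^p-y^p)) * ((1-p)*(x-y)*(x^p-y^p)/(8*x*y)) :=
            mul_le_mul_of_nonneg_right hS hm
        _ = (1-p)*(x-y)*(x^p-y^p)^2/2 := by
            field_simp
            ring

noncomputable def gg (q t : ℝ) : ℝ :=
  1 - ((1 + Real.sqrt (1 - t)) / 2) ^ q - ((1 - Real.sqrt (1 - t)) / 2) ^ q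

noncomputable def ww (q t : ℝ) : ℝ :=
  ((1 + Real.sqrt (1 - t)) / 2) ^ (q-1) - ((1 - Real.sqrt (1 - t)) / 2) ^ (q-1)

noncomputable def LL (q t : ℝ) : ℝ :=
  (2/q - 1) * Real.log (gg q t) + Real.log (ww q t) - Real.log (2 * Real.sqrt (1 - t))

noncomputable def DL (q t : ℝ) : ℝ :=
  ((2-q) * Real.sqrt (1-t) * (ww q t)^2 + 2 * (gg q t) * (ww q t)
    - (q-1) * Real.sqrt (1-t)
      * (((1 + Real.sqrt (1-t))/2)^(q-2) + ((1 - Real.sqrt (1-t))/2)^(q-2)) * (gg q t))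
  / (4 * (Real.sqrt (1-t) * Real.sqrt (1-t)) * (gg q t) * (ww q t))

-- basic facts bundle
lemma sqrt_facts {t : ℝ} (ht : t ∈ Ioo (0:ℝ) 1) :
    0 < Real.sqrt (1-t) ∧ Real.sqrt (1-t) < 1 ∧ Real.sqrt (1-t) * Real.sqrt (1-t) = 1 - t := by
  obtain ⟨ht0, ht1⟩ := ht
  have h0 : (0:ℝ) < 1 - t := by linarith
  have hs0 : 0 < Real.sqrt (1-t) := Real.sqrt_pos.2 h0
  have hsq : Real.sqrt (1-t) * Real.sqrt (1-t) = 1 - t := Real.mul_self_sqrt h0.le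
  have hs1 : Real.sqrt (1-t) < 1 := by nlinarith
  exact ⟨hs0, hs1, hsq⟩

lemma hasDerivAt_sqrt1t {t : ℝ} (ht : t ∈ Ioo (0:ℝ) 1) :
    HasDerivAt (fun u : ℝ => Real.sqrt (1-u)) (-(1/(2*Real.sqrt (1-t)))) t := by
  have h0 : (1:ℝ) - t ≠ 0 := by have := ht.2; intro hc; linarith
  have hin : HasDerivAt (fun u : ℝ => 1 - u) (-1) t := by
    have := (hasDerivAt_const t (1:ℝ)).sub (hasDerivAt_id t)
    refine this.congr_deriv ?_
    norm_num
  have := (Real.hasDerivAt_sqrt h0).comp t hin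
  refine this.congr_deriv ?_
  ring

lemma hasDerivAt_A {t : ℝ} (ht : t ∈ Ioo (0:ℝ) 1) :
    HasDerivAt (fun u : ℝ => (1 + Real.sqrt (1-u))/2) (-(1/(4*Real.sqrt (1-t)))) t := by
  have := ((hasDerivAt_sqrt1t ht).const_add 1).div_const 2
  refine this.congr_deriv ?_
  ring

lemma hasDerivAt_B {t : ℝ} (ht : t ∈ Ioo (0:ℝ) 1) :
    HasDerivAt (fun u : ℝ => (1 - Real.sqrt (1-u))/2) (1/(4*Real.sqrt (1-t))) t := by
  have := ((hasDerivAt_sqrt1t ht).const_sub 1).div_const 2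
  refine this.congr_deriv ?_
  ring

lemma AB_facts {t : ℝ} (ht : t ∈ Ioo (0:ℝ) 1) :
    0 < (1 - Real.sqrt (1-t))/2 ∧ (1 - Real.sqrt (1-t))/2 < (1 + Real.sqrt (1-t))/2
      ∧ (1 + Real.sqrt (1-t))/2 < 1 := by
  obtain ⟨hs0, hs1, _⟩ := sqrt_facts ht
  exact ⟨by linarith, by linarith, by linarith⟩

lemma gg_pos {q t : ℝ} (hq1 : 1 < q) (ht : t ∈ Ioo (0:ℝ) 1) : 0 < gg q t := by
  obtain ⟨hb0, hba, ha1⟩ := AB_facts ht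
  have ha0 : (0:ℝ) < (1 + Real.sqrt (1-t))/2 := hb0.trans hba
  have hb1 : (1 - Real.sqrt (1-t))/2 < 1 := by linarith
  have h1 : ((1 + Real.sqrt (1-t))/2) ^ q < (1 + Real.sqrt (1-t))/2 := by
    have := Real.rpow_lt_rpow_of_exponent_gt ha0 ha1 hq1
    simpa using this
  have h2 : ((1 - Real.sqrt (1-t))/2) ^ q < (1 - Real.sqrt (1-t))/2 := by
    have := Real.rpow_lt_rpow_of_exponent_gt hb0 hb1 hq1
    simpa using this
  have hab : (1 + Real.sqrt (1-t))/2 + (1 - Real.sqrt (1-t))/2 = 1 := by ring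
  unfold gg
  nlinarith

lemma ww_pos {q t : ℝ} (hq1 : 1 < q) (ht : t ∈ Ioo (0:ℝ) 1) : 0 < ww q t := by
  obtain ⟨hb0, hba, _⟩ := AB_facts ht
  have := Real.rpow_lt_rpow hb0.le hba (by linarith : (0:ℝ) < q - 1)
  unfold ww
  linarith

lemma hasDerivAt_gg {q t : ℝ} (hq1 : 1 < q) (ht : t ∈ Ioo (0:ℝ) 1) :
    HasDerivAt (gg q) (q * ww q t / (4 * Real.sqrt (1-t))) t := by
  obtain ⟨hb0, hba, _⟩ := AB_facts ht
  obtain ⟨hs0, _, _⟩ := sqrt_facts ht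
  have ha0 : (0:ℝ) < (1 + Real.sqrt (1-t))/2 := hb0.trans hba
  have hA := (hasDerivAt_A ht).rpow_const (p := q) (Or.inl ha0.ne')
  have hB := (hasDerivAt_B ht).rpow_const (p := q) (Or.inl hb0.ne')
  have := ((hasDerivAt_const t (1:ℝ)).sub hA).sub hB
  refine this.congr_deriv ?_
  unfold ww
  field_simp
  ring

lemma hasDerivAt_ww {q t : ℝ} (hq1 : 1 < q) (ht : t ∈ Ioo (0:ℝ) 1) :
    HasDerivAt (ww q)
      (-((q-1) * (((1 + Real.sqrt (1-t))/2)^(q-2) + ((1 - Real.sqrt (1-t))/2)^(q-2))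
        / (4 * Real.sqrt (1-t)))) t := by
  obtain ⟨hb0, hba, _⟩ := AB_facts ht
  obtain ⟨hs0, _, _⟩ := sqrt_facts ht
  have ha0 : (0:ℝ) < (1 + Real.sqrt (1-t))/2 := hb0.trans hba
  have hA := (hasDerivAt_A ht).rpow_const (p := q-1) (Or.inl ha0.ne')
  have hB := (hasDerivAt_B ht).rpow_const (p := q-1) (Or.inl hb0.ne')
  have hd := hA.sub hB
  refine hd.congr_deriv ?_
  rw [show q-1-1 = q-2 by ring]
  field_simp
  ring

lemma hasDerivAt_LL {q t : ℝ} (hq1 : 1 < q) (ht : t ∈ Ioo (0:ℝ) 1) :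
    HasDerivAt (LL q) (DL q t) t := by
  obtain ⟨hs0, hs1, hsq⟩ := sqrt_facts ht
  have hg := gg_pos hq1 ht
  have hw := ww_pos hq1 ht
  have hq0 : q ≠ 0 := by linarith
  have h1 : HasDerivAt (fun u => Real.log (gg q u))
      ((q * ww q t / (4 * Real.sqrt (1-t))) / gg q t) t :=
    (hasDerivAt_gg hq1 ht).log hg.ne'
  have h2 : HasDerivAt (fun u => Real.log (ww q u))
      ((-((q-1) * (((1 + Real.sqrt (1-t))/2)^(q-2) + ((1 - Real.sqrt (1-t))/2)^(q-2))
        / (4 * Real.sqrt (1-t)))) / ww q t) t :=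
    (hasDerivAt_ww hq1 ht).log hw.ne'
  have h3 : HasDerivAt (fun u => Real.log (2 * Real.sqrt (1-u)))
      ((2 * -(1/(2*Real.sqrt (1-t)))) / (2 * Real.sqrt (1-t))) t :=
    ((hasDerivAt_sqrt1t ht).const_mul 2).log (by positivity)
  have hd := ((h1.const_mul (2/q - 1)).add h2).sub h3
  have : LL q = fun u => (2/q - 1) * Real.log (gg q u) + Real.log (ww q u)
      - Real.log (2 * Real.sqrt (1-u)) := by
    funext u; rw [LL]
  rw [this]
  refine hd.congr_deriv ?_
  rw [DL]
  field_simp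
  ring

lemma DL_nonneg {q t : ℝ} (hq1 : 1 < q) (hq2 : q ≤ 2) (ht : t ∈ Ioo (0:ℝ) 1) :
    0 ≤ DL q t := by
  obtain ⟨hs0, hs1, hsq⟩ := sqrt_facts ht
  obtain ⟨hb0, hba, ha1⟩ := AB_facts ht
  have hg := gg_pos hq1 ht
  have hw := ww_pos hq1 ht
  have hp0 : 0 < q - 1 := by linarith
  have hp1 : q - 1 ≤ 1 := by linarith
  have hG : (0:ℝ) ≤ ((1 + Real.sqrt (1-t))/2 + (1 - Real.sqrt (1-t))/2)^(q-1+1)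
      - ((1 + Real.sqrt (1-t))/2)^(q-1+1) - ((1 - Real.sqrt (1-t))/2)^(q-1+1) := by
    rw [show (1 + Real.sqrt (1-t))/2 + (1 - Real.sqrt (1-t))/2 = 1 by ring,
      Real.one_rpow, show q-1+1 = q by ring]
    have := gg_pos hq1 ht
    rw [gg] at this
    linarith
  have key := cruxG hp0 hp1 hb0 hba hG
  rw [show (1 + Real.sqrt (1-t))/2 + (1 - Real.sqrt (1-t))/2 = 1 by ring,
    Real.one_rpow, show q-1+1 = q by ring, show q-1-1 = q-2 by ring,
    show (1 + Real.sqrt (1-t))/2 - (1 - Real.sqrt (1-t))/2 = Real.sqrt (1-t) by ring]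
    at key
  rw [DL]
  apply div_nonneg _ (by positivity)
  rw [gg, ww]
  nlinarith [key]

lemma gg_nonneg {q t : ℝ} (hq1 : 1 < q) (ht : t ∈ Icc (0:ℝ) 1) : 0 ≤ gg q t := by
  obtain ⟨ht0, ht1⟩ := ht
  have hs0 : 0 ≤ Real.sqrt (1-t) := Real.sqrt_nonneg _
  have hs1 : Real.sqrt (1-t) ≤ 1 := by
    have : Real.sqrt (1-t) ≤ Real.sqrt 1 := Real.sqrt_le_sqrt (by linarith)
    rwa [Real.sqrt_one] at this
  have ha0 : (0:ℝ) < (1 + Real.sqrt (1-t))/2 := by linarith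
  have ha1 : (1 + Real.sqrt (1-t))/2 ≤ 1 := by linarith
  have hb0 : (0:ℝ) ≤ (1 - Real.sqrt (1-t))/2 := by linarith
  have hA : ((1 + Real.sqrt (1-t))/2) ^ q ≤ (1 + Real.sqrt (1-t))/2 := by
    have := Real.rpow_le_rpow_of_exponent_ge ha0 ha1 hq1.le
    rwa [Real.rpow_one] at this
  have hB : ((1 - Real.sqrt (1-t))/2) ^ q ≤ (1 - Real.sqrt (1-t))/2 := by
    rcases eq_or_lt_of_le hb0 with heq | hlt
    · rw [← heq, Real.zero_rpow (by linarith : q ≠ 0)]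
    · have := Real.rpow_le_rpow_of_exponent_ge hlt (by linarith) hq1.le
      rwa [Real.rpow_one] at this
  rw [gg]
  linarith

lemma h_sq_eq {q t : ℝ} (hq1 : 1 < q) (hg : 0 ≤ gg q t) : (h q t)^2 = gg q t ^ (2/q) := by
  have hq0 : q ≠ 0 := by linarith
  have hsum : 1/q + 1/q = 2/q := by ring
  have hne : 1/q + 1/q ≠ 0 := by
    rw [hsum]; exact div_ne_zero two_ne_zero hq0
  rw [h, pow_two]
  show gg q t ^ (1/q) * gg q t ^ (1/q) = gg q t ^ (2/q)
  rw [← Real.rpow_add' hg hne, hsum]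

theorem h_sq_convex (q : ℝ) (hq1 : 1 < q) (hq2 : q ≤ 2) :
    ConvexOn ℝ (Set.Icc (0:ℝ) 1) (fun t => (h q t) ^ 2) := by
  have hq0 : q ≠ 0 := by linarith
  -- continuity
  have hgc : Continuous (gg q) := by
    have h1 : Continuous fun t : ℝ => (1 + Real.sqrt (1-t))/2 :=
      ((continuous_const.add (Real.continuous_sqrt.comp (continuous_const.sub continuous_id)))).div_const 2
    have h2 : Continuous fun t : ℝ => (1 - Real.sqrt (1-t))/2 :=
      ((continuous_const.sub (Real.continuous_sqrt.comp (continuous_const.sub continuous_id)))).div_const 2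
    exact (continuous_const.sub (h1.rpow_const fun x => Or.inr (by linarith))).sub
      (h2.rpow_const fun x => Or.inr (by linarith))
  have hFc : ContinuousOn (fun t => (h q t)^2) (Icc (0:ℝ) 1) := by
    exact ContinuousOn.congr ((hgc.rpow_const fun x => Or.inr (by positivity)).continuousOn)
      (fun t htm => h_sq_eq hq1 (gg_nonneg hq1 htm))
  -- derivative on interior
  have hHD : ∀ t ∈ Ioo (0:ℝ) 1, HasDerivAt (fun u => (h q u)^2) (Real.exp (LL q t)) t := by
    intro t ht
    obtain ⟨hs0, hs1, hsq⟩ := sqrt_facts ht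
    have hg := gg_pos hq1 ht
    have hw := ww_pos hq1 ht
    have hF2 : HasDerivAt (fun u => gg q u ^ (2/q))
        (q * ww q t / (4 * Real.sqrt (1-t)) * (2/q) * gg q t ^ (2/q - 1)) t :=
      (hasDerivAt_gg hq1 ht).rpow_const (Or.inl hg.ne')
    have hval : q * ww q t / (4 * Real.sqrt (1-t)) * (2/q) * gg q t ^ (2/q - 1)
        = Real.exp (LL q t) := by
      rw [LL, Real.exp_sub, Real.exp_add, Real.exp_log hw,
        Real.exp_log (by positivity : (0:ℝ) < 2 * Real.sqrt (1-t))]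
      have : Real.exp ((2/q - 1) * Real.log (gg q t)) = gg q t ^ (2/q - 1) := by
        rw [Real.rpow_def_of_pos hg, mul_comm]
      rw [this]
      field_simp
      ring
    rw [hval] at hF2
    apply hF2.congr_of_eventuallyEq
    filter_upwards [isOpen_Ioo.mem_nhds ht] with u hu
    exact h_sq_eq hq1 (gg_pos hq1 hu).le
  have hdiff : DifferentiableOn ℝ (fun t => (h q t)^2) (interior (Icc (0:ℝ) 1)) := by
    rw [interior_Icc]
    intro t ht
    exact (hHD t ht).differentiableAt.differentiableWithinAt
  -- monotonicity of deriv
  have hLLmono : MonotoneOn (LL q) (Ioo (0:ℝ) 1) := by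
    apply monotoneOn_of_deriv_nonneg (convex_Ioo 0 1)
    · intro t ht
      exact (hasDerivAt_LL hq1 ht).differentiableAt.continuousAt.continuousWithinAt
    · rw [interior_Ioo]
      intro t ht
      exact (hasDerivAt_LL hq1 ht).differentiableAt.differentiableWithinAt
    · rw [interior_Ioo]
      intro t ht
      rw [(hasDerivAt_LL hq1 ht).deriv]
      exact DL_nonneg hq1 hq2 ht
  have hmono : MonotoneOn (deriv fun t => (h q t)^2) (interior (Icc (0:ℝ) 1)) := by
    rw [interior_Icc]
    intro t1 h1 t2 h2 h12
    rw [(hHD t1 h1).deriv, (hHD t2 h2).deriv]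
    exact Real.exp_le_exp.2 (hLLmono h1 h2 h12)
  exact MonotoneOn.convexOn_of_deriv (convex_Icc 0 1) hFc hdiff hmono
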